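/- Let A be an N × N complex matrix whose eigenvalue λ of largest absolute value is unique (i.e., |λ| > |λ_j| for all other eigenvalues λ_j) and λ ≠ 0. Define |H_ℓ| := (1/det(I - zA))[ℓ], the ℓ-th coefficient of the power series 1/det(I - zA). Then there exists a bounded function f : ℕ → ℂ such that lim_{ℓ→∞} f(ℓ) exists and |H_ℓ| = λ^ℓ f(ℓ) for all ℓ ≥ 1. -/

import Mathlib

/-- The zeta function of a graph/matrix: the formal power series `1/det(I - zA)`. -/
noncomputable def graphZeta {N : ℕ} (A : Matrix (Fin N) (Fin N) ℂ) : PowerSeries ℂ :=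
  (Matrix.det (1 - (PowerSeries.X : PowerSeries ℂ) • A.map (PowerSeries.C)))⁻¹

open PowerSeries Polynomial Finset

-- step 1: (1 - Cμ X) * mk(μ^n) = 1
lemma geomMk (μ : ℂ) :
    (1 - PowerSeries.C μ * PowerSeries.X) * PowerSeries.mk (fun n => μ ^ n) = 1 := by
  ext n
  rw [sub_mul, one_mul, mul_assoc, map_sub]
  cases n with
  | zero => simp
  | succ n => simp [PowerSeries.coeff_succ_X_mul, pow_succ, mul_comm]

-- step 2: reverse of a product over a domain
lemma reverse_prod {ι : Type*} (s : Finset ι) (p : ι → Polynomial ℂ) :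
    (∏ i ∈ s, p i).reverse = ∏ i ∈ s, (p i).reverse := by
  classical
  induction s using Finset.induction with
  | empty => simp [Polynomial.reverse, Polynomial.reflect_one]
  | insert _ _ h ih => rw [Finset.prod_insert h, Finset.prod_insert h, reverse_mul_of_domain, ih]

lemma reverse_X_sub_C (μ : ℂ) :
    (Polynomial.X - Polynomial.C μ).reverse = 1 - Polynomial.C μ * Polynomial.X := by
  rw [Polynomial.reverse, natDegree_X_sub_C, reflect_sub, reflect_one_X, reflect_C]
  ring

lemma det_eq_coe {N : ℕ} (A : Matrix (Fin N) (Fin N) ℂ) :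
    Matrix.det (1 - (PowerSeries.X : PowerSeries ℂ) • A.map (PowerSeries.C))
      = ((A.charpolyRev : Polynomial ℂ) : PowerSeries ℂ) := by
  rw [Matrix.charpolyRev, ← Polynomial.coeToPowerSeries.ringHom_apply,
    RingHom.map_det]
  congr 1
  ext i j
  simp [Matrix.map_apply, Matrix.sub_apply, Matrix.smul_apply, Matrix.one_apply,
    apply_ite (Polynomial.coeToPowerSeries.ringHom (R := ℂ)), smul_eq_mul]
  split_ifs <;> simp [mul_comm, Polynomial.coeff_one, PowerSeries.coeff_one]

lemma graphZeta_eq_prod_mk {N : ℕ} (A : Matrix (Fin (N + 1)) (Fin (N + 1)) ℂ)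
    (lam : Fin (N + 1) → ℂ)
    (hchar : A.charpoly = ∏ i, (Polynomial.X - Polynomial.C (lam i))) :
    graphZeta A = ∏ i, PowerSeries.mk (fun n => lam i ^ n) := by
  have hrev : A.charpolyRev = ∏ i, (1 - Polynomial.C (lam i) * Polynomial.X) := by
    rw [← Matrix.reverse_charpoly, hchar, reverse_prod]
    exact Finset.prod_congr rfl fun i _ => reverse_X_sub_C _
  have hP : Matrix.det (1 - (PowerSeries.X : PowerSeries ℂ) • A.map (PowerSeries.C))
      = ∏ i, (1 - PowerSeries.C (lam i) * PowerSeries.X) := by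
    rw [det_eq_coe, hrev, ← Polynomial.coeToPowerSeries.ringHom_apply, map_prod]
    refine Finset.prod_congr rfl fun i _ => ?_
    simp [Polynomial.coeToPowerSeries.ringHom_apply]
  rw [graphZeta, hP]
  rw [PowerSeries.inv_eq_iff_mul_eq_one]
  · rw [← Finset.prod_mul_distrib]
    simp_rw [mul_comm (PowerSeries.mk _)]
    simp [geomMk]
  · rw [map_prod]
    simp

lemma card_finsuppAntidiag_le {ι : Type*} [DecidableEq ι] (s : Finset ι) (m : ℕ) :
    (Finset.finsuppAntidiag s m).card ≤ (m + 1) ^ s.card := by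
  classical
  have key : (Finset.finsuppAntidiag s m).card
      ≤ (Finset.univ : Finset ((j : s) → Fin (m + 1))).card := by
    refine Finset.card_le_card_of_injOn
      (fun l j => (⟨min (l j.1) m, by omega⟩ : Fin (m + 1)))
      (fun _ _ => Finset.mem_univ _) ?_
    intro l₁ h₁ l₂ h₂ h
    rw [Finset.mem_coe, Finset.mem_finsuppAntidiag] at h₁ h₂
    have hle : ∀ l : ι →₀ ℕ, s.sum l = m → ∀ j ∈ s, l j ≤ m := by
      intro l hl j hj
      rw [← hl]
      exact Finset.single_le_sum (fun _ _ => Nat.zero_le _) hj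
    ext j
    by_cases hj : j ∈ s
    · have := congrFun h ⟨j, hj⟩
      simpa [Nat.min_eq_left (hle l₁ h₁.1 j hj), Nat.min_eq_left (hle l₂ h₂.1 j hj),
        Fin.mk.injEq] using this
    · have e₁ : l₁ j = 0 := Finsupp.notMem_support_iff.mp fun hc => hj (h₁.2 hc)
      have e₂ : l₂ j = 0 := Finsupp.notMem_support_iff.mp fun hc => hj (h₂.2 hc)
      rw [e₁, e₂]
  simpa [Fintype.card_fun, Fintype.card_coe] using key

lemma coeff_prod_mk_bound {ι : Type*} [DecidableEq ι] (s : Finset ι) (μ : ι → ℂ) (ρ : ℝ)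
    (hρ0 : 0 ≤ ρ) (hρ : ∀ j ∈ s, ‖μ j‖ ≤ ρ) (m : ℕ) :
    ‖PowerSeries.coeff m (∏ j ∈ s, PowerSeries.mk fun n => μ j ^ n)‖
      ≤ ((m : ℝ) + 1) ^ s.card * ρ ^ m := by
  classical
  rw [PowerSeries.coeff_prod]
  refine le_trans (norm_sum_le _ _) ?_
  have hterm : ∀ l ∈ Finset.finsuppAntidiag s m,
      ‖∏ i ∈ s, PowerSeries.coeff (l i) (PowerSeries.mk fun n => μ i ^ n)‖
        ≤ ρ ^ m := by
    intro l hl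
    rw [Finset.mem_finsuppAntidiag] at hl
    simp only [PowerSeries.coeff_mk]
    rw [norm_prod]
    calc ∏ i ∈ s, ‖μ i ^ l i‖ ≤ ∏ i ∈ s, ρ ^ l i := by
          refine Finset.prod_le_prod (fun i _ => norm_nonneg _) (fun i hi => ?_)
          rw [norm_pow]
          exact pow_le_pow_left₀ (norm_nonneg _) (hρ i hi) _
      _ = ρ ^ (s.sum l) := by rw [← Finset.prod_pow_eq_pow_sum]
      _ = ρ ^ m := by rw [hl.1]
  calc ∑ l ∈ Finset.finsuppAntidiag s m,
        ‖∏ i ∈ s, PowerSeries.coeff (l i) (PowerSeries.mk fun n => μ i ^ n)‖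
      ≤ ∑ _l ∈ Finset.finsuppAntidiag s m, ρ ^ m := Finset.sum_le_sum hterm
    _ = (Finset.finsuppAntidiag s m).card * ρ ^ m := by rw [Finset.sum_const, nsmul_eq_mul]
    _ ≤ ((m : ℝ) + 1) ^ s.card * ρ ^ m := by
        refine mul_le_mul_of_nonneg_right ?_ (pow_nonneg hρ0 m)
        calc ((Finset.finsuppAntidiag s m).card : ℝ) ≤ ((m + 1) ^ s.card : ℕ) := by
              exact_mod_cast card_finsuppAntidiag_le s m
          _ = ((m : ℝ) + 1) ^ s.card := by push_cast; ring

set_option maxHeartbeats 1000000 in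
/-- if the eigenvalue `λ = lam 0` of `A` strictly dominates all others in absolute
value and is nonzero, then the coefficients `|H_ℓ| = (1/det(I-zA))[ℓ]` satisfy
`|H_ℓ| = λ^ℓ f(ℓ)` for a bounded function `f` having a limit as `ℓ → ∞`. -/
theorem coeff_inv_det_eq_pow_mul_bounded {N : ℕ} (A : Matrix (Fin (N + 1)) (Fin (N + 1)) ℂ)
    (lam : Fin (N + 1) → ℂ)
    (hchar : A.charpoly = ∏ i, (Polynomial.X - Polynomial.C (lam i)))
    (hdom : ∀ j, j ≠ 0 → ‖lam j‖ < ‖lam 0‖)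
    (hne : lam 0 ≠ 0) :
    ∃ f : ℕ → ℂ,
      (∃ C : ℝ, ∀ ℓ, ‖f ℓ‖ ≤ C) ∧
      (∃ L : ℂ, Filter.Tendsto f Filter.atTop (nhds L)) ∧
      ∀ ℓ : ℕ, 1 ≤ ℓ → PowerSeries.coeff ℓ (graphZeta A) = lam 0 ^ ℓ * f ℓ := by
  classical
  have hl0 : 0 < ‖lam 0‖ := by
    simpa using hne
  set s : Finset (Fin (N + 1)) := Finset.univ.erase 0 with hs
  set g : ℕ → ℂ :=
    fun m => PowerSeries.coeff m (∏ j ∈ s, PowerSeries.mk fun n => lam j ^ n) with hgdef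
  set ρ : ℝ := max (Finset.univ.sup' ⟨0, Finset.mem_univ 0⟩
      fun j => if j = 0 then 0 else ‖lam j‖) (‖lam 0‖ / 2) with hρdef
  have hρ0 : 0 < ρ := lt_max_of_lt_right (by positivity)
  have hρlt : ρ < ‖lam 0‖ := by
    refine max_lt ?_ (by linarith)
    refine (Finset.sup'_lt_iff _).2 ?_
    intro j _
    by_cases hj : j = 0
    · simpa [hj] using hl0
    · simpa [hj] using hdom j hj
  have hρle : ∀ j ∈ s, ‖lam j‖ ≤ ρ := by
    intro j hj
    have hj0 : j ≠ 0 := (Finset.mem_erase.mp hj).1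
    refine le_max_of_le_left (Finset.le_sup'_of_le _ (Finset.mem_univ j) ?_)
    simp [hj0]
  have hcard : s.card = N := by
    simp [hs, Finset.card_erase_of_mem]
  have hgbound : ∀ m, ‖g m‖ ≤ ((m : ℝ) + 1) ^ N * ρ ^ m := by
    intro m
    have := coeff_prod_mk_bound s lam ρ hρ0.le hρle m
    rwa [hcard] at this
  set r : ℝ := ρ / ‖lam 0‖ with hrdef
  have hr0 : 0 < r := div_pos hρ0 hl0
  have hr1 : r < 1 := (div_lt_one hl0).2 hρlt
  set u : ℕ → ℂ := fun m => g m * (lam 0)⁻¹ ^ m with hudef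
  have hub : ∀ m, ‖u m‖ ≤ ((m : ℝ) + 1) ^ N * r ^ m := by
    intro m
    have h1 : ‖u m‖ = ‖g m‖ * ((‖lam 0‖)⁻¹) ^ m := by
      simp [hudef, norm_mul, norm_pow, norm_inv]
    rw [h1]
    calc ‖g m‖ * ((‖lam 0‖)⁻¹) ^ m
        ≤ (((m : ℝ) + 1) ^ N * ρ ^ m) * ((‖lam 0‖)⁻¹) ^ m := by
          exact mul_le_mul_of_nonneg_right (hgbound m) (by positivity)
      _ = ((m : ℝ) + 1) ^ N * r ^ m := by
          rw [hrdef, div_eq_mul_inv, mul_pow, mul_assoc]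
  have hsum_v : Summable (fun m : ℕ => ((m : ℝ) + 1) ^ N * r ^ m) := by
    have h1 : Summable (fun n : ℕ => (n : ℝ) ^ N * r ^ n) :=
      summable_pow_mul_geometric_of_norm_lt_one N
        (by rw [Real.norm_eq_abs, abs_of_pos hr0]; exact hr1)
    have h2 : Summable (fun n : ℕ => ((n + 1 : ℕ) : ℝ) ^ N * r ^ (n + 1)) :=
      (summable_nat_add_iff (f := fun n : ℕ => (n : ℝ) ^ N * r ^ n) 1).2 h1
    refine (h2.mul_left r⁻¹).congr fun n => ?_
    push_cast
    rw [pow_succ]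
    field_simp
  have hsum_norm : Summable (fun m => ‖u m‖) :=
    Summable.of_nonneg_of_le (fun m => norm_nonneg _) hub hsum_v
  have hsum_u : Summable u := hsum_norm.of_norm
  refine ⟨fun ℓ => ∑ m ∈ Finset.range (ℓ + 1), u m, ⟨∑' m, ‖u m‖, ?_⟩,
    ⟨∑' m, u m, ?_⟩, ?_⟩
  · intro ℓ
    calc ‖∑ m ∈ Finset.range (ℓ + 1), u m‖
        ≤ ∑ m ∈ Finset.range (ℓ + 1), ‖u m‖ := by
          simpa using norm_sum_le (Finset.range (ℓ + 1)) u
      _ ≤ ∑' m, ‖u m‖ := Summable.sum_le_tsum _ (fun _ _ => norm_nonneg _) hsum_norm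
  · exact (hsum_u.hasSum.tendsto_sum_nat).comp (Filter.tendsto_add_atTop_nat 1)
  · intro ℓ _
    rw [graphZeta_eq_prod_mk A lam hchar,
      ← Finset.mul_prod_erase Finset.univ _ (Finset.mem_univ 0),
      PowerSeries.coeff_mul, Finset.Nat.sum_antidiagonal_eq_sum_range_succ_mk,
      ← Finset.sum_range_reflect, Finset.mul_sum]
    refine Finset.sum_congr rfl fun k hk => ?_
    rw [Finset.mem_range] at hk
    have hk' : k ≤ ℓ := Nat.lt_succ_iff.mp hk
    have h1 : ℓ + 1 - 1 - k = ℓ - k := by omega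
    have h2 : ℓ - (ℓ - k) = k := Nat.sub_sub_self hk'
    rw [h1, h2]
    simp only [PowerSeries.coeff_mk, ← hs, ← hgdef]
    rw [hudef]
    have h3 : lam 0 ^ ℓ = lam 0 ^ (ℓ - k) * lam 0 ^ k := by
      rw [← pow_add, Nat.sub_add_cancel hk']
    have h4 : lam 0 ^ k * (lam 0)⁻¹ ^ k = 1 := by
      rw [← mul_pow, mul_inv_cancel₀ hne, one_pow]
    rw [h3, mul_assoc]
    congr 1
    show g k = lam 0 ^ k * (g k * (lam 0)⁻¹ ^ k)
    rw [mul_comm (g k), ← mul_assoc, h4, one_mul]
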